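/- Let kᵢ, ℓᵢ (1 ≤ i ≤ m), b, n₁, n₂ be positive integers with kᵢ, ℓᵢ ≤ b and 9b² < n₁, n₂, and let λᵢ > 0 be real numbers. If Rᵢ are families of kᵢ×ℓᵢ rectangles in Z_{n₁} × Z_{n₂} whose union is proj-intersecting, then Σᵢ λᵢ|Rᵢ| ≤ max( n₁·Σᵢ λᵢℓᵢ , n₂·Σᵢ λᵢkᵢ ). -/

import Mathlib

/-- Cyclic distance in `ZMod n`: the smaller of the two distances along the cycle. -/
def cdist {n : ℕ} (u v : ZMod n) : ℕ := min (u - v).val (v - u).val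

/-- The cyclic interval of length `k` with left end `i` in `ZMod n`. -/
def cInt {n : ℕ} (i : ZMod n) (k : ℕ) : Finset (ZMod n) :=
  (Finset.range k).image (fun j : ℕ => (i + (j : ZMod n) : ZMod n))

/-- Distance between two cyclic intervals: minimum cyclic distance between elements. -/
noncomputable def iDist {n : ℕ} (I J : Finset (ZMod n)) : ℕ :=
  sInf {d | ∃ u ∈ I, ∃ v ∈ J, d = cdist u v}

/-- `P` is a `k × ℓ` rectangle in `ZMod n₁ × ZMod n₂`. -/
def IsRect {n₁ n₂ : ℕ} (k ℓ : ℕ) (P : Finset (ZMod n₁) × Finset (ZMod n₂)) : Prop :=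
  (∃ i, P.1 = cInt i k) ∧ (∃ j, P.2 = cInt j ℓ)

/-- A family of rectangles is proj-intersecting if any two members have intersecting
projections in at least one coordinate. -/
def ProjIntersecting {n₁ n₂ : ℕ} (R : Finset (Finset (ZMod n₁) × Finset (ZMod n₂))) : Prop :=
  ∀ P ∈ R, ∀ Q ∈ R, (P.1 ∩ Q.1).Nonempty ∨ (P.2 ∩ Q.2).Nonempty

namespace S10
variable {n : ℕ}

lemma npos [NeZero n] : 0 < n := Nat.pos_of_ne_zero (NeZero.ne n)

lemma mod_cases [NeZero n] {X : ℕ} (h : X < 2*n) :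
    (X % n = X ∧ X < n) ∨ (X % n = X - n ∧ n ≤ X) := by
  rcases lt_or_ge X n with h1 | h1
  · exact Or.inl ⟨Nat.mod_eq_of_lt h1, h1⟩
  · exact Or.inr ⟨by rw [Nat.mod_eq_sub_mod h1, Nat.mod_eq_of_lt (by omega)], h1⟩

lemma val_sub' [NeZero n] (a b : ZMod n) : (a - b).val = (n + a.val - b.val) % n := by
  have hb := ZMod.val_lt b
  rw [sub_eq_add_neg, ZMod.val_add, ZMod.neg_val]
  split_ifs with h
  · subst h; simp [ZMod.val_zero]
  · congr 1; omega

lemma cast_val [NeZero n] (a : ZMod n) : ((a.val : ℕ) : ZMod n) = a :=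
  ZMod.natCast_rightInverse a

lemma mem_cInt [NeZero n] {x u : ZMod n} {k : ℕ} (hk : k ≤ n) :
    u ∈ cInt x k ↔ (u - x).val < k := by
  constructor
  · intro hu
    obtain ⟨j, hj, rfl⟩ := Finset.mem_image.mp hu
    have hj' := Finset.mem_range.mp hj
    rw [add_sub_cancel_left, ZMod.val_natCast, Nat.mod_eq_of_lt (by omega)]
    exact hj'
  · intro h
    refine Finset.mem_image.mpr ⟨(u - x).val, Finset.mem_range.mpr h, ?_⟩
    rw [cast_val]; ring

lemma card_cInt [NeZero n] (x : ZMod n) {k : ℕ} (hk : k ≤ n) : (cInt x k).card = k := by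
  rw [cInt, Finset.card_image_of_injOn, Finset.card_range]
  intro j1 h1 j2 h2 he
  simp only [Finset.mem_coe, Finset.mem_range] at h1 h2
  have : ((j1 : ZMod n)) = (j2 : ZMod n) := add_left_cancel he
  have := congrArg ZMod.val this
  rwa [ZMod.val_natCast, ZMod.val_natCast, Nat.mod_eq_of_lt (by omega), Nat.mod_eq_of_lt (by omega)] at this

-- difference dichotomy
lemma val_sub_add [NeZero n] (a b : ZMod n) :
    (a = b ∧ (a-b).val = 0 ∧ (b-a).val = 0) ∨ ((a-b).val + (b-a).val = n) := by
  rcases eq_or_ne a b with rfl | hne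
  · left; simp
  · right
    have h1 := val_sub' a b
    have h2 := val_sub' b a
    have ha := ZMod.val_lt a
    have hb := ZMod.val_lt b
    have hab : a.val ≠ b.val := fun h => hne (by
      have := congrArg (fun t : ℕ => (t : ZMod n)) h
      simpa [cast_val] using this)
    rcases mod_cases (n := n) (X := n + a.val - b.val) (by omega) with ⟨e1, l1⟩ | ⟨e1, l1⟩ <;>
      rcases mod_cases (n := n) (X := n + b.val - a.val) (by omega) with ⟨e2, l2⟩ | ⟨e2, l2⟩ <;>
        omega

lemma inter_nonempty_iff [NeZero n] {x a : ZMod n} {k m : ℕ} (hk : 0 < k) (hm : 0 < m)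
    (h : k + m ≤ n) :
    (cInt x k ∩ cInt a m).Nonempty ↔ (a - x).val < k ∨ (x - a).val < m := by
  constructor
  · rintro ⟨u, hu⟩
    rw [Finset.mem_inter] at hu
    have h1 := (mem_cInt (by omega)).mp hu.1
    have h2 := (mem_cInt (by omega)).mp hu.2
    -- (a-x) = (u-x) - (u-a)
    have e : a - x = (u - x) - (u - a) := by ring
    have e2 : x - a = (u - a) - (u - x) := by ring
    have v1 := val_sub' (u-x) (u-a)
    have v2 := val_sub' (u-a) (u-x)
    rw [← e] at v1
    rw [← e2] at v2
    have l1 := ZMod.val_lt (u - x)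
    have l2 := ZMod.val_lt (u - a)
    rcases mod_cases (n := n) (X := n + (u-x).val - (u-a).val) (by omega) with ⟨e1, j1⟩ | ⟨e1, j1⟩ <;>
      rcases mod_cases (n := n) (X := n + (u-a).val - (u-x).val) (by omega) with ⟨e2, j2⟩ | ⟨e2, j2⟩ <;>
        omega
  · rintro (h1 | h1)
    · exact ⟨a, Finset.mem_inter.mpr ⟨(mem_cInt (by omega)).mpr h1,
        (mem_cInt (by omega)).mpr (by simp [hm])⟩⟩
    · exact ⟨x, Finset.mem_inter.mpr ⟨(mem_cInt (by omega)).mpr (by simp [hk]),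
        (mem_cInt (by omega)).mpr h1⟩⟩


lemma mem_window_iff [NeZero n] {x a : ZMod n} {k m : ℕ} (hk : 0<k) (hm : 0 < m) (h : k+m ≤ n) :
    x ∈ cInt (a - ((k-1 : ℕ) : ZMod n)) (k + m - 1) ↔ (a - x).val < k ∨ (x - a).val < m := by
  have hmem : x ∈ cInt (a - ((k-1:ℕ):ZMod n)) (k+m-1) ↔
      (x - (a - ((k-1:ℕ):ZMod n))).val < k+m-1 := mem_cInt (by omega)
  have e : x - (a - ((k-1:ℕ):ZMod n)) = (x - a) + ((k-1:ℕ):ZMod n) := by ring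
  have c1 : ((x - a) + ((k-1:ℕ):ZMod n)).val = ((x-a).val + (k-1)) % n := by
    rw [ZMod.val_add, ZMod.val_natCast, Nat.mod_eq_of_lt (show k-1 < n by omega)]
  rw [hmem, e, c1]
  have l1 := ZMod.val_lt (x - a)
  rcases val_sub_add a x with ⟨he, ha1, ha2⟩ | hs <;>
    rcases mod_cases (n:=n) (X := (x-a).val + (k-1)) (by omega) with ⟨e1,j1⟩ | ⟨e1,j1⟩ <;>
      rw [e1] <;> omega

lemma inter_window [NeZero n] {x a : ZMod n} {k m : ℕ} (hk : 0<k) (hm : 0 < m) (h : k+m ≤ n) :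
    (cInt x k ∩ cInt a m).Nonempty ↔ x ∈ cInt (a - ((k-1:ℕ):ZMod n)) (k+m-1) := by
  rw [inter_nonempty_iff hk hm h, mem_window_iff hk hm h]

lemma star_iff [NeZero n] {x q : ZMod n} {k : ℕ} (hk : 0<k) (h : k+1 ≤ n) :
    x ∈ cInt (q - ((k-1:ℕ):ZMod n)) k ↔ q ∈ cInt x k := by
  have h2 := mem_window_iff (x := x) (a := q) (k := k) (m := 1) hk one_pos h
  rw [show k + 1 - 1 = k by omega] at h2
  rw [h2, mem_cInt (by omega)]
  constructor
  · rintro (h1 | h1)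
    · exact h1
    · have hx : x - q = 0 := (ZMod.val_eq_zero _).mp (by omega)
      have hqx : q - x = 0 := by rw [← neg_sub, hx, neg_zero]
      rw [hqx]; simpa using hk
  · exact Or.inl

lemma cInt_mono [NeZero n] {x : ZMod n} {k k' : ℕ} (h : k ≤ k') (h2 : k' ≤ n) :
    cInt x k ⊆ cInt x k' := by
  intro u hu; rw [mem_cInt (le_trans h h2)] at hu; rw [mem_cInt h2]; omega

lemma star_subset [NeZero n] {x q : ZMod n} {k bb : ℕ} (hk : 0<k) (hkb : k ≤ bb) (h : 2*bb ≤ n)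
    (hq : q ∈ cInt x k) : cInt x k ⊆ cInt (q - ((bb-1:ℕ):ZMod n)) (2*bb-1) := by
  intro u hu
  have hs := (mem_cInt (by omega)).mp hu
  have he := (mem_cInt (by omega)).mp hq
  rw [mem_cInt (by omega)]
  have e : u - (q - ((bb-1:ℕ):ZMod n)) = ((u-x) - (q-x)) + ((bb-1:ℕ):ZMod n) := by ring
  have c0 := val_sub' (u-x) (q-x)
  have c1 : (((u-x) - (q-x)) + ((bb-1:ℕ):ZMod n)).val = (((u-x)-(q-x)).val + (bb-1)) % n := by
    rw [ZMod.val_add, ZMod.val_natCast, Nat.mod_eq_of_lt (show bb-1 < n by omega)]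
  rw [e, c1, c0]
  have l1 := ZMod.val_lt (u-x); have l2 := ZMod.val_lt (q-x)
  rcases mod_cases (n:=n) (X := n + (u-x).val - (q-x).val) (by omega) with ⟨e1,j1⟩|⟨e1,j1⟩ <;>
    rw [e1] <;>
    [rcases mod_cases (n:=n) (X := (n + (u-x).val - (q-x).val) + (bb-1)) (by omega) with ⟨e2,j2⟩|⟨e2,j2⟩;
     rcases mod_cases (n:=n) (X := (n + (u-x).val - (q-x).val - n) + (bb-1)) (by omega) with ⟨e2,j2⟩|⟨e2,j2⟩] <;>
    rw [e2] <;> omega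

lemma exists_blocked_col [NeZero n] {q xh : ZMod n} {kk kh bb : ℕ} (hkk : 0<kk) (hkh : 0<kh)
    (h1 : kk ≤ bb) (h2 : kh ≤ bb) (hn : 4*bb ≤ n) (hq : q ∉ cInt xh kh) :
    ∃ x', q ∈ cInt x' kk ∧ (cInt x' kk ∩ cInt xh kh) = ∅ := by
  have hqq : q ∈ cInt q kk := by
    rw [mem_cInt (by omega)]; simpa using hkk
  by_cases hR : (cInt q kk ∩ cInt xh kh).Nonempty
  · refine ⟨q - ((kk-1:ℕ):ZMod n), ?_, ?_⟩
    · rw [mem_cInt (by omega)]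
      have e : q - (q - ((kk-1:ℕ):ZMod n)) = ((kk-1:ℕ):ZMod n) := by ring
      rw [e, ZMod.val_natCast, Nat.mod_eq_of_lt (show kk-1 < n by omega)]; omega
    · by_contra hne
      rw [← ne_eq, ← Finset.nonempty_iff_ne_empty] at hne
      have hRc := (inter_nonempty_iff hkk hkh (by omega)).mp hR
      have hLc := (inter_nonempty_iff hkk hkh (by omega)).mp hne
      have hqv : ¬ ((q - xh).val < kh) := fun hcon => hq ((mem_cInt (by omega)).mpr hcon)
      rcases val_sub_add q xh with ⟨he, hv1, hv2⟩ | hs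
      · omega
      have ea : xh - (q - ((kk-1:ℕ):ZMod n)) = (xh - q) + ((kk-1:ℕ):ZMod n) := by ring
      have eb : (q - ((kk-1:ℕ):ZMod n)) - xh = (q - xh) - ((kk-1:ℕ):ZMod n) := by ring
      have c1 : ((xh - q) + ((kk-1:ℕ):ZMod n)).val = ((xh-q).val + (kk-1)) % n := by
        rw [ZMod.val_add, ZMod.val_natCast, Nat.mod_eq_of_lt (show kk-1 < n by omega)]
      have c2 : ((q - xh) - ((kk-1:ℕ):ZMod n)).val = (n + (q-xh).val - (kk-1)) % n := by
        rw [val_sub', ZMod.val_natCast, Nat.mod_eq_of_lt (show kk-1 < n by omega)]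
      rw [ea, eb, c1, c2] at hLc
      have l1 := ZMod.val_lt (xh - q); have l2 := ZMod.val_lt (q - xh)
      rcases mod_cases (n:=n) (X := (xh-q).val + (kk-1)) (by omega) with ⟨e1,j1⟩|⟨e1,j1⟩ <;>
        rcases mod_cases (n:=n) (X := n + (q-xh).val - (kk-1)) (by omega) with ⟨e2,j2⟩|⟨e2,j2⟩ <;>
          rw [e1, e2] at hLc <;> omega
  · exact ⟨q, hqq, Finset.not_nonempty_iff_eq_empty.mp hR⟩

lemma union_cover [NeZero n] {y₁ y₂ : ZMod n} {l₁ l₂ bb : ℕ} (h1 : 0<l₁) (h2 : 0<l₂)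
    (hb1 : l₁ ≤ bb) (hb2 : l₂ ≤ bb) (hn : 4*bb ≤ n)
    (hmeet : (cInt y₁ l₁ ∩ cInt y₂ l₂).Nonempty) :
    ∃ ys : ZMod n, ∃ L : ℕ, 0 < L ∧ L ≤ l₁ + l₂ - 1 ∧
      cInt y₁ l₁ ⊆ cInt ys L ∧ cInt y₂ l₂ ⊆ cInt ys L := by
  rcases (inter_nonempty_iff h1 h2 (by omega)).mp hmeet with hd | hd
  · refine ⟨y₁, l₁+l₂-1, by omega, le_refl _, cInt_mono (by omega) (by omega), ?_⟩
    intro u hu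
    rw [mem_cInt (by omega)] at hu ⊢
    have e : u - y₁ = (u - y₂) + (y₂ - y₁) := by ring
    rw [e, ZMod.val_add, Nat.mod_eq_of_lt (by omega)]
    omega
  · refine ⟨y₂, l₁+l₂-1, by omega, le_refl _, ?_, cInt_mono (by omega) (by omega)⟩
    intro u hu
    rw [mem_cInt (by omega)] at hu ⊢
    have e : u - y₂ = (u - y₁) + (y₁ - y₂) := by ring
    rw [e, ZMod.val_add, Nat.mod_eq_of_lt (by omega)]
    omega


lemma gap_point_aux [NeZero n] {x₁ x₂ : ZMod n} {k₁ k₂ bb : ℕ} (hk₁ : 0<k₁) (hk₂ : 0<k₂)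
    (h1 : k₁ ≤ bb) (h2 : k₂ ≤ bb) (hn : 9*bb ≤ n)
    (hdisj : cInt x₁ k₁ ∩ cInt x₂ k₂ = ∅)
    (hgap : (x₂ - x₁).val ≤ k₁ + bb - 2) :
    ∀ x : ZMod n, ∀ kk : ℕ, 0 < kk → kk ≤ bb →
      (cInt x kk ∩ cInt x₁ k₁).Nonempty → (cInt x kk ∩ cInt x₂ k₂).Nonempty →
      x₁ + ((k₁-1:ℕ):ZMod n) ∈ cInt x kk := by
  intro x kk hkk hkb hA hB
  have hdn := (inter_nonempty_iff hk₁ hk₂ (show k₁+k₂ ≤ n by omega)).not.mp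
    (by rw [hdisj]; exact Finset.not_nonempty_empty)
  push_neg at hdn
  have hA' := (inter_nonempty_iff hkk hk₁ (by omega)).mp hA
  have hB' := (inter_nonempty_iff hkk hk₂ (by omega)).mp hB
  rw [mem_cInt (by omega)]
  have eg : (x₁ + ((k₁-1:ℕ):ZMod n)) - x = (x₁ - x) + ((k₁-1:ℕ):ZMod n) := by ring
  have cg : ((x₁ - x) + ((k₁-1:ℕ):ZMod n)).val = ((x₁-x).val + (k₁-1)) % n := by
    rw [ZMod.val_add, ZMod.val_natCast, Nat.mod_eq_of_lt (show k₁-1<n by omega)]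
  rw [eg, cg]
  have r1 := val_sub_add x₁ x
  have r2 := val_sub_add x₂ x
  have r3 := val_sub_add x₂ x₁
  have e1 : x₂ - x = (x₂ - x₁) + (x₁ - x) := by ring
  have v1 : (x₂ - x).val = ((x₂-x₁).val + (x₁-x).val) % n := by rw [e1, ZMod.val_add]
  have e2' : x - x₁ = (x - x₂) + (x₂ - x₁) := by ring
  have v2 : (x - x₁).val = ((x-x₂).val + (x₂-x₁).val) % n := by rw [e2', ZMod.val_add]
  have l1 := ZMod.val_lt (x₂-x₁); have l2 := ZMod.val_lt (x₁-x); have l3 := ZMod.val_lt (x-x₁)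
  have l4 := ZMod.val_lt (x₂-x); have l5 := ZMod.val_lt (x-x₂); have l6 := ZMod.val_lt (x₁-x₂)
  rcases mod_cases (n:=n) (X := (x₂-x₁).val + (x₁-x).val) (by omega) with ⟨e2,j2⟩|⟨e2,j2⟩ <;>
    rw [e2] at v1 <;>
    rcases mod_cases (n:=n) (X := (x-x₂).val + (x₂-x₁).val) (by omega) with ⟨e4,j4⟩|⟨e4,j4⟩ <;>
      rw [e4] at v2 <;>
      rcases mod_cases (n:=n) (X := (x₁-x).val + (k₁-1)) (by omega) with ⟨e3,j3⟩|⟨e3,j3⟩ <;>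
        rw [e3] <;> omega

lemma gap_point [NeZero n] {x₁ x₂ : ZMod n} {k₁ k₂ bb : ℕ} (hk₁ : 0<k₁) (hk₂ : 0<k₂)
    (h1 : k₁ ≤ bb) (h2 : k₂ ≤ bb) (hn : 9*bb ≤ n)
    (hdisj : cInt x₁ k₁ ∩ cInt x₂ k₂ = ∅) :
    ∃ q : ZMod n, ∀ x : ZMod n, ∀ kk : ℕ, 0 < kk → kk ≤ bb →
      (cInt x kk ∩ cInt x₁ k₁).Nonempty → (cInt x kk ∩ cInt x₂ k₂).Nonempty →
      q ∈ cInt x kk := by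
  by_cases hg1 : (x₂ - x₁).val ≤ k₁ + bb - 2
  · exact ⟨_, gap_point_aux hk₁ hk₂ h1 h2 hn hdisj hg1⟩
  by_cases hg2 : (x₁ - x₂).val ≤ k₂ + bb - 2
  · refine ⟨x₂ + ((k₂-1:ℕ):ZMod n), ?_⟩
    intro x kk hkk hkb hA hB
    exact gap_point_aux hk₂ hk₁ h2 h1 hn (by rw [Finset.inter_comm]; exact hdisj) hg2 x kk hkk hkb hB hA
  · refine ⟨0, ?_⟩
    intro x kk hkk hkb hA hB
    exfalso
    have hdn := (inter_nonempty_iff hk₁ hk₂ (show k₁+k₂ ≤ n by omega)).not.mp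
      (by rw [hdisj]; exact Finset.not_nonempty_empty)
    push_neg at hdn
    have hA' := (inter_nonempty_iff hkk hk₁ (by omega)).mp hA
    have hB' := (inter_nonempty_iff hkk hk₂ (by omega)).mp hB
    have r1 := val_sub_add x₁ x
    have r2 := val_sub_add x₂ x
    have r3 := val_sub_add x₂ x₁
    have e1 : x₂ - x = (x₂ - x₁) + (x₁ - x) := by ring
    have v1 : (x₂ - x).val = ((x₂-x₁).val + (x₁-x).val) % n := by rw [e1, ZMod.val_add]
    have e2' : x - x₁ = (x - x₂) + (x₂ - x₁) := by ring
    have v2 : (x - x₁).val = ((x-x₂).val + (x₂-x₁).val) % n := by rw [e2', ZMod.val_add]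
    have l1 := ZMod.val_lt (x₂-x₁); have l2 := ZMod.val_lt (x₁-x); have l3 := ZMod.val_lt (x-x₁)
    have l4 := ZMod.val_lt (x₂-x); have l5 := ZMod.val_lt (x-x₂); have l6 := ZMod.val_lt (x₁-x₂)
    rcases mod_cases (n:=n) (X := (x₂-x₁).val + (x₁-x).val) (by omega) with ⟨e2,j2⟩|⟨e2,j2⟩ <;>
      rw [e2] at v1 <;>
      rcases mod_cases (n:=n) (X := (x-x₂).val + (x₂-x₁).val) (by omega) with ⟨e4,j4⟩|⟨e4,j4⟩ <;>
        rw [e4] at v2 <;> omega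


lemma helly [NeZero n] {bb : ℕ} (hn : 9*bb ≤ n) (hbb : 0 < bb) (S : Finset (ZMod n × ℕ))
    (hS : S.Nonempty) (hlen : ∀ p ∈ S, 0 < p.2 ∧ p.2 ≤ bb)
    (hmeet : ∀ p ∈ S, ∀ r ∈ S, (cInt p.1 p.2 ∩ cInt r.1 r.2).Nonempty) :
    ∃ z : ZMod n, ∀ p ∈ S, z ∈ cInt p.1 p.2 := by
  classical
  obtain ⟨p₀, hp₀⟩ := hS
  set g : ZMod n × ℕ → ℤ := fun p => if (p.1 - p₀.1).val < p₀.2 then ((p.1 - p₀.1).val : ℤ)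
    else -(((p₀.1 - p.1).val : ℤ)) with hg
  have hgb : ∀ p ∈ S, g p < bb ∧ -(bb:ℤ) < g p ∧ p.1 = p₀.1 + ((g p : ℤ) : ZMod n) := by
    intro p hp
    have hb1 := hlen p hp
    have hb0 := hlen p₀ hp₀
    have hm := (inter_nonempty_iff hb1.1 hb0.1 (by omega)).mp (hmeet p hp p₀ hp₀)
    rw [hg]
    simp only []
    split_ifs with hcase
    · refine ⟨by exact_mod_cast lt_of_lt_of_le hcase hb0.2, ?_, ?_⟩
      · have : (0:ℤ) ≤ ((p.1 - p₀.1).val : ℤ) := Int.natCast_nonneg _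
        omega
      · push_cast
        rw [cast_val]
        ring
    · have hcase2 : (p₀.1 - p.1).val < p.2 := by tauto
      refine ⟨?_, ?_, ?_⟩
      · have : (0:ℤ) ≤ ((p₀.1 - p.1).val : ℤ) := Int.natCast_nonneg _
        omega
      · have : ((p₀.1 - p.1).val : ℤ) < bb := by exact_mod_cast lt_of_lt_of_le hcase2 hb1.2
        omega
      · push_cast
        rw [cast_val]
        ring
  have hSne : (S.image g).Nonempty := ⟨g p₀, Finset.mem_image_of_mem g hp₀⟩
  set M : ℤ := (S.image g).max' hSne with hM
  obtain ⟨pm, hpm, hpmM⟩ := Finset.mem_image.mp ((S.image g).max'_mem hSne)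
  rw [← hM] at hpmM
  refine ⟨p₀.1 + ((M : ℤ) : ZMod n), ?_⟩
  intro p hp
  have hgp := hgb p hp
  have hgm := hgb pm hpm
  have hle : g p ≤ M := Finset.le_max' _ _ (Finset.mem_image_of_mem g hp)
  have hMb : M < (bb:ℤ) := by rw [← hpmM]; exact hgm.1
  set Δ : ℤ := M - g p with hΔ
  have hΔ0 : 0 ≤ Δ := by omega
  have hΔ2 : Δ < 2*bb := by
    have := hgp.2.1
    omega
  have hkey : ((Δ.toNat : ℕ) : ZMod n) = ((Δ : ℤ) : ZMod n) := by
    rw [← Int.cast_natCast, Int.toNat_of_nonneg hΔ0]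
  have hcast : (p₀.1 + ((M : ℤ) : ZMod n)) - p.1 = ((Δ.toNat : ℕ) : ZMod n) := by
    rw [hgp.2.2, hkey, hΔ]
    push_cast
    ring
  have hval : ((p₀.1 + ((M : ℤ) : ZMod n)) - p.1).val = Δ.toNat := by
    rw [hcast, ZMod.val_natCast, Nat.mod_eq_of_lt (by omega)]
  rw [mem_cInt (by have := (hlen p hp).2; omega), hval]
  have hb1 := hlen pm hpm
  have hb2 := hlen p hp
  have hm := (inter_nonempty_iff hb2.1 hb1.1 (by omega)).mp (hmeet p hp pm hpm)
  have hc1 : pm.1 - p.1 = ((Δ.toNat : ℕ) : ZMod n) := by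
    rw [hgp.2.2, hgm.2.2, hpmM, hkey, hΔ]
    push_cast
    ring
  have hv1 : (pm.1 - p.1).val = Δ.toNat := by
    rw [hc1, ZMod.val_natCast, Nat.mod_eq_of_lt (by omega)]
  rcases hm with hm | hm
  · rw [hv1] at hm; exact hm
  · rcases eq_or_lt_of_le hΔ0 with hz | hz
    · have hz0 : Δ.toNat = 0 := by omega
      rw [hz0]; exact hb2.1
    · exfalso
      have hc2 : p.1 - pm.1 = -(((Δ.toNat : ℕ) : ZMod n)) := by
        rw [← neg_sub, hc1]
      have hne0 : ((Δ.toNat : ℕ) : ZMod n) ≠ 0 := by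
        intro hcon
        have := congrArg ZMod.val hcon
        rw [ZMod.val_natCast, Nat.mod_eq_of_lt (by omega), ZMod.val_zero] at this
        omega
      have hv2 : (p.1 - pm.1).val = n - Δ.toNat := by
        rw [hc2, ZMod.neg_val]
        rw [if_neg hne0, ZMod.val_natCast, Nat.mod_eq_of_lt (by omega)]
      rw [hv2] at hm
      have := hb1.2
      omega

noncomputable def corner (s : Finset (ZMod n)) : ZMod n :=
  if h : ∃ u ∈ s, u - 1 ∉ s then h.choose else 0

lemma corner_cInt [NeZero n] {x : ZMod n} {k : ℕ} (hk : 0 < k) (hkn : 2*k ≤ n) :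
    corner (cInt x k) = x := by
  have hn2 : 2 ≤ n := by omega
  have hex : ∃ u ∈ cInt x k, u - 1 ∉ cInt x k := by
    refine ⟨x, (mem_cInt (by omega)).mpr (by simpa using hk), ?_⟩
    rw [mem_cInt (by omega)]
    have e : (x - 1 - x : ZMod n) = (0:ZMod n) - 1 := by ring
    rw [e, val_sub', ZMod.val_zero, ZMod.val_one_eq_one_mod,
      Nat.mod_eq_of_lt (show 1 < n by omega), Nat.mod_eq_of_lt (show n + 0 - 1 < n by omega)]
    omega
  rw [corner, dif_pos hex]
  obtain ⟨hu1, hu2⟩ := hex.choose_spec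
  have hv := (mem_cInt (by omega)).mp hu1
  by_contra hne
  apply hu2
  rw [mem_cInt (by omega)]
  have ht0 : (hex.choose - x).val ≠ 0 := by
    intro hcon
    exact hne (by
      have : hex.choose - x = 0 := (ZMod.val_eq_zero _).mp hcon
      have := sub_eq_zero.mp this
      exact this)
  have e : hex.choose - 1 - x = (hex.choose - x) - 1 := by ring
  have e2 : (hex.choose - x) - 1 = (((hex.choose - x).val - 1 : ℕ) : ZMod n) := by
    rw [Nat.cast_sub (by omega), cast_val]
    push_cast
    ring
  rw [e, e2, ZMod.val_natCast, Nat.mod_eq_of_lt (by omega)]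
  omega


lemma card_le_of_corners {n₁ n₂ : ℕ} [NeZero n₁] [NeZero n₂]
    {R : Finset (Finset (ZMod n₁) × Finset (ZMod n₂))} {kk ll : ℕ}
    (hk : 0<kk) (hl : 0<ll) (h1 : 2*kk ≤ n₁) (h2 : 2*ll ≤ n₂)
    (hrect : ∀ P ∈ R, IsRect kk ll P) (S : Finset (ZMod n₁ × ZMod n₂))
    (hsub : ∀ P ∈ R, (corner P.1, corner P.2) ∈ S) : R.card ≤ S.card := by
  apply Finset.card_le_card_of_injOn (fun P => (corner P.1, corner P.2)) (fun P hP => hsub P (Finset.mem_coe.mp hP))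
  intro P hP Q hQ he
  obtain ⟨⟨x1, e1⟩, ⟨y1, f1⟩⟩ := hrect P (Finset.mem_coe.mp hP)
  obtain ⟨⟨x2, e2⟩, ⟨y2, f2⟩⟩ := hrect Q (Finset.mem_coe.mp hQ)
  have c1 : corner P.1 = x1 := by rw [e1]; exact corner_cInt hk h1
  have c2 : corner Q.1 = x2 := by rw [e2]; exact corner_cInt hk h1
  have d1 : corner P.2 = y1 := by rw [f1]; exact corner_cInt hl h2
  have d2 : corner Q.2 = y2 := by rw [f2]; exact corner_cInt hl h2
  have hx : x1 = x2 := by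
    have := congrArg Prod.fst he
    simpa [c1, c2] using this
  have hy : y1 = y2 := by
    have := congrArg Prod.snd he
    simpa [d1, d2] using this
  have : P.1 = Q.1 := by rw [e1, e2, hx]
  have h2' : P.2 = Q.2 := by rw [f1, f2, hy]
  exact Prod.ext this h2'

lemma aux_star (m b n₁ n₂ : ℕ) (k ℓ : Fin m → ℕ) (lam : Fin m → ℝ)
    (hk : ∀ i, 0 < k i ∧ k i ≤ b) (hl : ∀ i, 0 < ℓ i ∧ ℓ i ≤ b) (hlam : ∀ i, 0 < lam i)
    (hb : 1 ≤ b) (h1 : 9 * b ^ 2 < n₁) (h2 : 9 * b ^ 2 < n₂)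
    (R : Fin m → Finset (Finset (ZMod n₁) × Finset (ZMod n₂)))
    (hrect : ∀ i, ∀ P ∈ R i, IsRect (k i) (ℓ i) P)
    (hproj : ProjIntersecting (Finset.univ.biUnion R))
    (q : ZMod n₁) (ys : ZMod n₂) (Ly : ℕ) (hLy : 0 < Ly) (hLyb : Ly ≤ 2*b)
    (hD : ∀ P ∈ Finset.univ.biUnion R, q ∈ P.1 ∨ (P.2 ∩ cInt ys Ly).Nonempty)
    (hnear : ∀ P ∈ Finset.univ.biUnion R, q ∈ P.1 ∨
      (P.1 ∩ cInt (q - ((b-1:ℕ) : ZMod n₁)) (2*b-1)).Nonempty) :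
    ∑ i, lam i * ((R i).card : ℝ) ≤ (n₂:ℝ) * ∑ i, lam i * (k i : ℝ) := by
  classical
  have hbsq : 1 ≤ b^2 := Nat.one_le_pow 2 b hb
  have hbsq2 : b*b = b^2 := by ring
  have hn1b : 9*b ≤ n₁ := by nlinarith
  have hn2b : 9*b ≤ n₂ := by nlinarith
  haveI : NeZero n₁ := ⟨by omega⟩
  haveI : NeZero n₂ := ⟨by omega⟩
  have key : ∀ i : Fin m, (R i).card ≤ k i * n₂ := by
    intro i
    have hki := hk i
    have hli := hl i
    by_cases hH : ∀ P ∈ Finset.univ.biUnion R, q ∈ P.1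
    · -- pure star bound
      have hcard : (R i).card ≤ ((cInt (q - ((k i - 1 : ℕ) : ZMod n₁)) (k i)) ×ˢ
          (Finset.univ : Finset (ZMod n₂))).card := by
        apply card_le_of_corners hki.1 hli.1 (by omega) (by omega) (hrect i)
        intro P hP
        have hPT : P ∈ Finset.univ.biUnion R :=
          Finset.mem_biUnion.mpr ⟨i, Finset.mem_univ i, hP⟩
        obtain ⟨⟨x, hx⟩, ⟨y, hy⟩⟩ := hrect i P hP
        have cx : corner P.1 = x := by rw [hx]; exact corner_cInt hki.1 (by omega)
        rw [Finset.mem_product]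
        constructor
        · rw [cx]
          rw [star_iff hki.1 (by omega)]
          rw [← hx]
          exact hH P hPT
        · exact Finset.mem_univ _
      rw [Finset.card_product, card_cInt _ (by omega), Finset.card_univ, ZMod.card] at hcard
      exact hcard
    · push_neg at hH
      obtain ⟨h, hhT, hqh⟩ := hH
      obtain ⟨j, hjR⟩ : ∃ j, h ∈ R j := by
        obtain ⟨j, _, hj2⟩ := Finset.mem_biUnion.mp hhT
        exact ⟨j, hj2⟩
      obtain ⟨⟨xh, hxh⟩, ⟨yh, hyh⟩⟩ := hrect j h hjR
      have hkj := hk j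
      have hlj := hl j
      have hqh' : q ∉ cInt xh (k j) := by rw [← hxh]; exact hqh
      obtain ⟨x', hx'q, hx'disj⟩ := exists_blocked_col hki.1 hkj.1 hki.2 hkj.2 (by omega) hqh'
      set S1 : Finset (ZMod n₁ × ZMod n₂) :=
        ((cInt (q - ((k i - 1 : ℕ) : ZMod n₁)) (k i)).erase x') ×ˢ (Finset.univ : Finset (ZMod n₂)) with hS1
      set S2 : Finset (ZMod n₁ × ZMod n₂) :=
        {x'} ×ˢ cInt (yh - ((ℓ i - 1 : ℕ) : ZMod n₂)) (ℓ i + ℓ j - 1) with hS2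
      set S3 : Finset (ZMod n₁ × ZMod n₂) :=
        (cInt ((q - ((b-1:ℕ) : ZMod n₁)) - ((k i - 1 : ℕ) : ZMod n₁)) (k i + (2*b-1) - 1)) ×ˢ
          (cInt (ys - ((ℓ i - 1 : ℕ) : ZMod n₂)) (ℓ i + Ly - 1)) with hS3
      have hcard : (R i).card ≤ (S1 ∪ S2 ∪ S3).card := by
        apply card_le_of_corners hki.1 hli.1 (by omega) (by omega) (hrect i)
        intro P hP
        have hPT : P ∈ Finset.univ.biUnion R :=
          Finset.mem_biUnion.mpr ⟨i, Finset.mem_univ i, hP⟩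
        obtain ⟨⟨x, hx⟩, ⟨y, hy⟩⟩ := hrect i P hP
        have cx : corner P.1 = x := by rw [hx]; exact corner_cInt hki.1 (by omega)
        have cy : corner P.2 = y := by rw [hy]; exact corner_cInt hli.1 (by omega)
        by_cases hqP : q ∈ P.1
        · have hxstar : x ∈ cInt (q - ((k i - 1 : ℕ) : ZMod n₁)) (k i) := by
            rw [star_iff hki.1 (by omega), ← hx]; exact hqP
          by_cases hxx : x = x'
          · -- column: P.1 disjoint from h.1, so P.2 meets h.2
            apply Finset.mem_union_left
            apply Finset.mem_union_right
            rw [hS2, Finset.mem_product]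
            refine ⟨by rw [cx, hxx]; exact Finset.mem_singleton_self _, ?_⟩
            have hdisjPh : P.1 ∩ h.1 = ∅ := by
              rw [hx, hxh, hxx]; exact hx'disj
            have := hproj P hPT h hhT
            rcases this with hc | hc
            · rw [hdisjPh] at hc; exact absurd hc (by simp)
            · rw [hy, hyh] at hc
              rw [cy]
              rw [← inter_window hli.1 hlj.1 (by omega)]
              exact hc
          · apply Finset.mem_union_left
            apply Finset.mem_union_left
            rw [hS1, Finset.mem_product]
            constructor
            · show corner P.1 ∈ _
              rw [cx]
              exact Finset.mem_erase.mpr ⟨hxx, hxstar⟩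
            · exact Finset.mem_univ _
        · apply Finset.mem_union_right
          rw [hS3, Finset.mem_product]
          constructor
          · have := hnear P hPT
            rcases this with hc | hc
            · exact absurd hc hqP
            · rw [hx] at hc
              rw [cx, ← inter_window hki.1 (by omega) (by omega)]
              exact hc
          · have := hD P hPT
            rcases this with hc | hc
            · exact absurd hc hqP
            · rw [hy] at hc
              rw [cy, ← inter_window hli.1 hLy (by omega)]
              exact hc
      have hc1 : S1.card = (k i - 1) * n₂ := by
        rw [hS1, Finset.card_product, Finset.card_univ, ZMod.card,
          Finset.card_erase_of_mem (by rw [star_iff hki.1 (by omega)]; exact hx'q),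
          card_cInt _ (by omega)]
      have hc2 : S2.card = ℓ i + ℓ j - 1 := by
        rw [hS2, Finset.card_product, Finset.card_singleton, card_cInt _ (by omega), one_mul]
      have hc3 : S3.card = (k i + (2*b-1) - 1) * (ℓ i + Ly - 1) := by
        rw [hS3, Finset.card_product, card_cInt _ (by omega), card_cInt _ (by omega)]
      have htot : (R i).card ≤ (k i - 1)*n₂ + (ℓ i + ℓ j - 1) + (k i + (2*b-1) - 1)*(ℓ i + Ly - 1) := by
        calc (R i).card ≤ (S1 ∪ S2 ∪ S3).card := hcard
          _ ≤ (S1 ∪ S2).card + S3.card := Finset.card_union_le _ _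
          _ ≤ S1.card + S2.card + S3.card := by
              have := Finset.card_union_le S1 S2
              omega
          _ = _ := by rw [hc1, hc2, hc3]
      -- numeric
      obtain ⟨c, hcc⟩ : ∃ c, c + 2 = 3*b := ⟨3*b-2, by omega⟩
      obtain ⟨d, hdd⟩ : ∃ d, d + 1 = 3*b := ⟨3*b-1, by omega⟩
      have e1 : (c+2)*(d+1) = 9*b^2 := by rw [hcc, hdd]; ring
      have e2 : (c+2)*(d+1) = c*d + c + 2*d + 2 := by ring
      have hcd : c*d + c + 2*d + 2 = 9*b^2 := e2.symm.trans e1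
      have hmul : (k i + (2*b-1) - 1)*(ℓ i + Ly - 1) ≤ c*d :=
        Nat.mul_le_mul (by omega) (by omega)
      have hfin : (ℓ i + ℓ j - 1) + (k i + (2*b-1) - 1)*(ℓ i + Ly - 1) ≤ n₂ := by
        have h9 : 9*b^2 < n₂ := h2
        generalize hgen : c*d = p at hcd hmul
        generalize hgen2 : b^2 = s at hcd h9
        omega
      have : (k i - 1)*n₂ + n₂ = k i * n₂ := by
        have : k i - 1 + 1 = k i := by omega
        calc (k i - 1)*n₂ + n₂ = (k i - 1 + 1) * n₂ := by ring
          _ = k i * n₂ := by rw [this]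
      omega
  calc ∑ i, lam i * ((R i).card : ℝ)
      ≤ ∑ i, lam i * ((k i * n₂ : ℕ) : ℝ) := by
        apply Finset.sum_le_sum
        intro i _
        exact mul_le_mul_of_nonneg_left (Nat.cast_le.mpr (key i)) (le_of_lt (hlam i))
    _ = (n₂:ℝ) * ∑ i, lam i * (k i : ℝ) := by
        rw [Finset.mul_sum]
        apply Finset.sum_congr rfl
        intro i _
        push_cast
        ring



lemma arith_mixed (K L b n₂ : ℕ) (e1 : 1 ≤ K) (e2 : K ≤ b) (e3 : 1 ≤ L) (e4 : L ≤ b)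
    (e5 : 9*b^2 < n₂) :
    K*(L+b-1) + (K+b-1)*L + (K+(2*b-1))*(L+(2*b-1)) ≤ K*n₂ := by
  zify [show 1 ≤ L+b by omega, show 1 ≤ K+b by omega, show 1 ≤ 2*b by omega]
  have c1 : ((L:ℤ)) ≤ b := by exact_mod_cast e4
  have c2 : (1:ℤ) ≤ K := by exact_mod_cast e1
  have c3 : ((K:ℤ)) ≤ b := by exact_mod_cast e2
  have c4 : (1:ℤ) ≤ L := by exact_mod_cast e3
  have c5 : (9*(b:ℤ)^2+1) ≤ n₂ := by exact_mod_cast e5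
  nlinarith [mul_le_mul_of_nonneg_left c1 (by linarith : (0:ℤ) ≤ (K:ℤ)),
    mul_le_mul_of_nonneg_left c5 (by linarith : (0:ℤ) ≤ (K:ℤ)-1),
    mul_le_mul_of_nonneg_left c5 (by linarith : (0:ℤ) ≤ 1), sq_nonneg ((b:ℤ)-1)]

set_option maxHeartbeats 1000000 in
lemma aux_mixed (m b n₁ n₂ : ℕ) (k ℓ : Fin m → ℕ) (lam : Fin m → ℝ)
    (hk : ∀ i, 0 < k i ∧ k i ≤ b) (hl : ∀ i, 0 < ℓ i ∧ ℓ i ≤ b) (hlam : ∀ i, 0 < lam i)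
    (hb : 1 ≤ b) (h1 : 9 * b ^ 2 < n₁) (h2 : 9 * b ^ 2 < n₂)
    (R : Fin m → Finset (Finset (ZMod n₁) × Finset (ZMod n₂)))
    (hrect : ∀ i, ∀ P ∈ R i, IsRect (k i) (ℓ i) P)
    (hproj : ProjIntersecting (Finset.univ.biUnion R))
    (q : ZMod n₁) (ys : ZMod n₂) (Ly : ℕ) (hLy : 0 < Ly) (hLyb : Ly ≤ 2*b)
    (hD : ∀ P ∈ Finset.univ.biUnion R, q ∈ P.1 ∨ (P.2 ∩ cInt ys Ly).Nonempty)
    (p : ZMod n₂) (xs : ZMod n₁) (Lx : ℕ) (hLx : 0 < Lx) (hLxb : Lx ≤ 2*b)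
    (hD2 : ∀ P ∈ Finset.univ.biUnion R, p ∈ P.2 ∨ (P.1 ∩ cInt xs Lx).Nonempty)
    (h0 : Finset (ZMod n₁) × Finset (ZMod n₂)) (hh0T : h0 ∈ Finset.univ.biUnion R)
    (hh0far : h0.1 ∩ cInt (q - ((b-1:ℕ):ZMod n₁)) (2*b-1) = ∅)
    (h1r : Finset (ZMod n₁) × Finset (ZMod n₂)) (hh1T : h1r ∈ Finset.univ.biUnion R)
    (hh1far : h1r.2 ∩ cInt (p - ((b-1:ℕ):ZMod n₂)) (2*b-1) = ∅) :
    ∑ i, lam i * ((R i).card : ℝ) ≤ (n₂:ℝ) * ∑ i, lam i * (k i : ℝ) := by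
  classical
  have hbsq : 1 ≤ b^2 := Nat.one_le_pow 2 b hb
  have hbsq2 : b*b = b^2 := by ring
  have hn1b : 9*b ≤ n₁ := by nlinarith
  have hn2b : 9*b ≤ n₂ := by nlinarith
  haveI : NeZero n₁ := ⟨by omega⟩
  haveI : NeZero n₂ := ⟨by omega⟩
  obtain ⟨j0, hj0R⟩ : ∃ j, h0 ∈ R j := by
    obtain ⟨j, _, hj2⟩ := Finset.mem_biUnion.mp hh0T
    exact ⟨j, hj2⟩
  obtain ⟨⟨xh0, hxh0⟩, ⟨yh0, hyh0⟩⟩ := hrect j0 h0 hj0R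
  obtain ⟨j1, hj1R⟩ : ∃ j, h1r ∈ R j := by
    obtain ⟨j, _, hj2⟩ := Finset.mem_biUnion.mp hh1T
    exact ⟨j, hj2⟩
  obtain ⟨⟨xh1, hxh1⟩, ⟨yh1, hyh1⟩⟩ := hrect j1 h1r hj1R
  have key : ∀ i : Fin m, (R i).card ≤ k i * n₂ := by
    intro i
    have hki := hk i
    have hli := hl i
    have hkj0 := hk j0; have hlj0 := hl j0
    have hkj1 := hk j1; have hlj1 := hl j1
    set S1 : Finset (ZMod n₁ × ZMod n₂) :=
      (cInt (q - ((k i - 1 : ℕ) : ZMod n₁)) (k i)) ×ˢ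
        (cInt (yh0 - ((ℓ i - 1 : ℕ) : ZMod n₂)) (ℓ i + ℓ j0 - 1)) with hS1
    set S2 : Finset (ZMod n₁ × ZMod n₂) :=
      (cInt (xh1 - ((k i - 1 : ℕ) : ZMod n₁)) (k i + k j1 - 1)) ×ˢ
        (cInt (p - ((ℓ i - 1 : ℕ) : ZMod n₂)) (ℓ i)) with hS2
    set S3 : Finset (ZMod n₁ × ZMod n₂) :=
      (cInt (xs - ((k i - 1 : ℕ) : ZMod n₁)) (k i + Lx - 1)) ×ˢ
        (cInt (ys - ((ℓ i - 1 : ℕ) : ZMod n₂)) (ℓ i + Ly - 1)) with hS3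
    have hcard : (R i).card ≤ (S1 ∪ S2 ∪ S3).card := by
      apply card_le_of_corners hki.1 hli.1 (by omega) (by omega) (hrect i)
      intro P hP
      have hPT : P ∈ Finset.univ.biUnion R :=
        Finset.mem_biUnion.mpr ⟨i, Finset.mem_univ i, hP⟩
      obtain ⟨⟨x, hx⟩, ⟨y, hy⟩⟩ := hrect i P hP
      have cx : corner P.1 = x := by rw [hx]; exact corner_cInt hki.1 (by omega)
      have cy : corner P.2 = y := by rw [hy]; exact corner_cInt hli.1 (by omega)
      by_cases hqP : q ∈ P.1
      · -- P.1 within window around q, disjoint from h0.1, so y-meets h0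
        apply Finset.mem_union_left; apply Finset.mem_union_left
        rw [hS1, Finset.mem_product]
        constructor
        · show corner P.1 ∈ _
          rw [cx, star_iff hki.1 (by omega), ← hx]
          exact hqP
        · show corner P.2 ∈ _
          have hsub : P.1 ⊆ cInt (q - ((b-1:ℕ):ZMod n₁)) (2*b-1) := by
            rw [hx]
            exact star_subset hki.1 hki.2 (by omega) (by rw [← hx]; exact hqP)
          have hdisj : P.1 ∩ h0.1 = ∅ := by
            rw [Finset.eq_empty_iff_forall_notMem]
            intro u hu
            rw [Finset.mem_inter] at hu
            have : u ∈ h0.1 ∩ cInt (q - ((b-1:ℕ):ZMod n₁)) (2*b-1) :=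
              Finset.mem_inter.mpr ⟨hu.2, hsub hu.1⟩
            rw [hh0far] at this
            exact absurd this (Finset.notMem_empty u)
          rcases hproj P hPT h0 hh0T with hc | hc
          · rw [hdisj] at hc; exact absurd hc (by simp)
          · rw [hy, hyh0] at hc
            rw [cy, ← inter_window hli.1 hlj0.1 (by omega)]
            exact hc
      · by_cases hpP : p ∈ P.2
        · apply Finset.mem_union_left; apply Finset.mem_union_right
          rw [hS2, Finset.mem_product]
          constructor
          · show corner P.1 ∈ _
            have hsub : P.2 ⊆ cInt (p - ((b-1:ℕ):ZMod n₂)) (2*b-1) := by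
              rw [hy]
              exact star_subset hli.1 hli.2 (by omega) (by rw [← hy]; exact hpP)
            have hdisj : P.2 ∩ h1r.2 = ∅ := by
              rw [Finset.eq_empty_iff_forall_notMem]
              intro u hu
              rw [Finset.mem_inter] at hu
              have : u ∈ h1r.2 ∩ cInt (p - ((b-1:ℕ):ZMod n₂)) (2*b-1) :=
                Finset.mem_inter.mpr ⟨hu.2, hsub hu.1⟩
              rw [hh1far] at this
              exact absurd this (Finset.notMem_empty u)
            rcases hproj P hPT h1r hh1T with hc | hc
            · rw [hx, hxh1] at hc
              rw [cx, ← inter_window hki.1 hkj1.1 (by omega)]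
              exact hc
            · rw [hdisj] at hc; exact absurd hc (by simp)
          · show corner P.2 ∈ _
            rw [cy, star_iff hli.1 (by omega), ← hy]
            exact hpP
        · apply Finset.mem_union_right
          rw [hS3, Finset.mem_product]
          constructor
          · show corner P.1 ∈ _
            rcases hD2 P hPT with hc | hc
            · exact absurd hc hpP
            · rw [hx] at hc
              rw [cx, ← inter_window hki.1 hLx (by omega)]
              exact hc
          · show corner P.2 ∈ _
            rcases hD P hPT with hc | hc
            · exact absurd hc hqP
            · rw [hy] at hc
              rw [cy, ← inter_window hli.1 hLy (by omega)]
              exact hc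
    have hc1 : S1.card = k i * (ℓ i + ℓ j0 - 1) := by
      rw [hS1, Finset.card_product, card_cInt _ (by omega), card_cInt _ (by omega)]
    have hc2 : S2.card = (k i + k j1 - 1) * ℓ i := by
      rw [hS2, Finset.card_product, card_cInt _ (by omega), card_cInt _ (by omega)]
    have hc3 : S3.card = (k i + Lx - 1) * (ℓ i + Ly - 1) := by
      rw [hS3, Finset.card_product, card_cInt _ (by omega), card_cInt _ (by omega)]
    have htot : (R i).card ≤ k i * (ℓ i + ℓ j0 - 1) + (k i + k j1 - 1) * ℓ i
        + (k i + Lx - 1) * (ℓ i + Ly - 1) := by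
      calc (R i).card ≤ (S1 ∪ S2 ∪ S3).card := hcard
        _ ≤ (S1 ∪ S2).card + S3.card := Finset.card_union_le _ _
        _ ≤ S1.card + S2.card + S3.card := by
            have := Finset.card_union_le S1 S2
            omega
        _ = _ := by rw [hc1, hc2, hc3]
    have hm1 : k i * (ℓ i + ℓ j0 - 1) ≤ k i * (ℓ i + b - 1) :=
      Nat.mul_le_mul_left _ (by omega)
    have hm2 : (k i + k j1 - 1) * ℓ i ≤ (k i + b - 1) * ℓ i :=
      Nat.mul_le_mul_right _ (by omega)
    have hm3 : (k i + Lx - 1)*(ℓ i + Ly - 1) ≤ (k i + (2*b-1))*(ℓ i + (2*b-1)) :=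
      Nat.mul_le_mul (by omega) (by omega)
    have hfin : k i * (ℓ i + b - 1) + (k i + b - 1) * ℓ i
        + (k i + (2*b-1))*(ℓ i + (2*b-1)) ≤ k i * n₂ :=
      arith_mixed (k i) (ℓ i) b n₂ hki.1 hki.2 hli.1 hli.2 h2
    omega
  calc ∑ i, lam i * ((R i).card : ℝ)
      ≤ ∑ i, lam i * ((k i * n₂ : ℕ) : ℝ) := by
        apply Finset.sum_le_sum
        intro i _
        exact mul_le_mul_of_nonneg_left (Nat.cast_le.mpr (key i)) (le_of_lt (hlam i))
    _ = (n₂:ℝ) * ∑ i, lam i * (k i : ℝ) := by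
        rw [Finset.mul_sum]
        apply Finset.sum_congr rfl
        intro i _
        push_cast
        ring


lemma aux_star_swapped (m b n₁ n₂ : ℕ) (k ℓ : Fin m → ℕ) (lam : Fin m → ℝ)
    (hk : ∀ i, 0 < k i ∧ k i ≤ b) (hl : ∀ i, 0 < ℓ i ∧ ℓ i ≤ b) (hlam : ∀ i, 0 < lam i)
    (hb : 1 ≤ b) (h1 : 9 * b ^ 2 < n₁) (h2 : 9 * b ^ 2 < n₂)
    (R : Fin m → Finset (Finset (ZMod n₁) × Finset (ZMod n₂)))
    (hrect : ∀ i, ∀ P ∈ R i, IsRect (k i) (ℓ i) P)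
    (hproj : ProjIntersecting (Finset.univ.biUnion R))
    (q : ZMod n₂) (ys : ZMod n₁) (Ly : ℕ) (hLy : 0 < Ly) (hLyb : Ly ≤ 2*b)
    (hD : ∀ P ∈ Finset.univ.biUnion R, q ∈ P.2 ∨ (P.1 ∩ cInt ys Ly).Nonempty)
    (hnear : ∀ P ∈ Finset.univ.biUnion R, q ∈ P.2 ∨
      (P.2 ∩ cInt (q - ((b-1:ℕ) : ZMod n₂)) (2*b-1)).Nonempty) :
    ∑ i, lam i * ((R i).card : ℝ) ≤ (n₁:ℝ) * ∑ i, lam i * (ℓ i : ℝ) := by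
  classical
  set R' : Fin m → Finset (Finset (ZMod n₂) × Finset (ZMod n₁)) :=
    fun i => (R i).image Prod.swap with hR'
  have hmem' : ∀ P', P' ∈ Finset.univ.biUnion R' →
      ∃ Q ∈ Finset.univ.biUnion R, Prod.swap Q = P' := by
    intro P' hP'
    obtain ⟨i, _, hP'i⟩ := Finset.mem_biUnion.mp hP'
    obtain ⟨Q, hQ, rfl⟩ := Finset.mem_image.mp hP'i
    exact ⟨Q, Finset.mem_biUnion.mpr ⟨i, Finset.mem_univ i, hQ⟩, rfl⟩
  have hrect' : ∀ i, ∀ P ∈ R' i, IsRect (ℓ i) (k i) P := by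
    intro i P hP
    obtain ⟨Q, hQ, rfl⟩ := Finset.mem_image.mp hP
    obtain ⟨⟨x, hx⟩, ⟨y, hy⟩⟩ := hrect i Q hQ
    exact ⟨⟨y, by simpa using hy⟩, ⟨x, by simpa using hx⟩⟩
  have hproj' : ProjIntersecting (Finset.univ.biUnion R') := by
    intro P hP Q hQ
    obtain ⟨P0, hP0, rfl⟩ := hmem' P hP
    obtain ⟨Q0, hQ0, rfl⟩ := hmem' Q hQ
    rcases hproj P0 hP0 Q0 hQ0 with hc | hc
    · right; simpa using hc
    · left; simpa using hc
  have hD' : ∀ P ∈ Finset.univ.biUnion R', q ∈ P.1 ∨ (P.2 ∩ cInt ys Ly).Nonempty := by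
    intro P hP
    obtain ⟨P0, hP0, rfl⟩ := hmem' P hP
    simpa using hD P0 hP0
  have hnear' : ∀ P ∈ Finset.univ.biUnion R', q ∈ P.1 ∨
      (P.1 ∩ cInt (q - ((b-1:ℕ) : ZMod n₂)) (2*b-1)).Nonempty := by
    intro P hP
    obtain ⟨P0, hP0, rfl⟩ := hmem' P hP
    simpa using hnear P0 hP0
  have := aux_star m b n₂ n₁ ℓ k lam hl hk hlam hb h2 h1 R' hrect' hproj' q ys Ly hLy hLyb hD' hnear'
  have hcard : ∀ i, (R' i).card = (R i).card := fun i =>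
    Finset.card_image_of_injective _ Prod.swap_injective
  calc ∑ i, lam i * ((R i).card : ℝ) = ∑ i, lam i * ((R' i).card : ℝ) := by
        apply Finset.sum_congr rfl
        intro i _
        rw [hcard]
    _ ≤ (n₁:ℝ) * ∑ i, lam i * (ℓ i : ℝ) := this


end S10

open S10 in
set_option maxHeartbeats 2000000 in
theorem stmt10 (m b n₁ n₂ : ℕ) (k ℓ : Fin m → ℕ) (lam : Fin m → ℝ)
    (hk : ∀ i, 0 < k i ∧ k i ≤ b) (hl : ∀ i, 0 < ℓ i ∧ ℓ i ≤ b)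
    (hlam : ∀ i, 0 < lam i)
    (h1 : 9 * b ^ 2 < n₁) (h2 : 9 * b ^ 2 < n₂)
    (R : Fin m → Finset (Finset (ZMod n₁) × Finset (ZMod n₂)))
    (hrect : ∀ i, ∀ P ∈ R i, IsRect (k i) (ℓ i) P)
    (hproj : ProjIntersecting (Finset.univ.biUnion R)) :
    ∑ i, lam i * ((R i).card : ℝ) ≤
      max ((n₁ : ℝ) * ∑ i, lam i * (ℓ i : ℝ)) ((n₂ : ℝ) * ∑ i, lam i * (k i : ℝ)) := by
  classical
  have hsum1 : (0:ℝ) ≤ (n₁:ℝ) * ∑ i, lam i * (ℓ i : ℝ) := by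
    apply mul_nonneg (by positivity)
    exact Finset.sum_nonneg (fun i _ => mul_nonneg (hlam i).le (by positivity))
  rcases Nat.eq_zero_or_pos m with hm0 | hm0
  · subst hm0
    simpa using le_max_left _ hsum1 |>.trans (le_max_left _ _) |>.trans_eq rfl
  have hb : 1 ≤ b := le_trans (hk ⟨0, hm0⟩).1 (hk ⟨0, hm0⟩).2
  have hbsq : 1 ≤ b^2 := Nat.one_le_pow 2 b hb
  have hbsq2 : b*b = b^2 := by ring
  have hn1b : 9*b ≤ n₁ := by nlinarith
  have hn2b : 9*b ≤ n₂ := by nlinarith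
  haveI : NeZero n₁ := ⟨by omega⟩
  haveI : NeZero n₂ := ⟨by omega⟩
  by_cases hTe : (Finset.univ.biUnion R).Nonempty
  swap
  · -- all families empty
    have hRe : ∀ i, R i = ∅ := by
      intro i
      rw [Finset.eq_empty_iff_forall_notMem]
      intro P hP
      exact hTe ⟨P, Finset.mem_biUnion.mpr ⟨i, Finset.mem_univ i, hP⟩⟩
    refine le_trans ?_ (le_max_left _ _)
    apply le_trans ?_ hsum1
    apply le_of_eq
    apply Finset.sum_eq_zero
    intro i _
    rw [hRe i]
    simp
  -- data extraction helper
  have hdata : ∀ P ∈ Finset.univ.biUnion R, ∃ i : Fin m, P ∈ R i ∧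
      P.1 = cInt (corner P.1) (k i) ∧ P.2 = cInt (corner P.2) (ℓ i) ∧
      P.1.card = k i ∧ P.2.card = ℓ i := by
    intro P hP
    obtain ⟨i, _, hPR⟩ := Finset.mem_biUnion.mp hP
    obtain ⟨⟨x, hx⟩, ⟨y, hy⟩⟩ := hrect i P hPR
    have cx : corner P.1 = x := by rw [hx]; exact corner_cInt (hk i).1 (by have := (hk i).2; omega)
    have cy : corner P.2 = y := by rw [hy]; exact corner_cInt (hl i).1 (by have := (hl i).2; omega)
    refine ⟨i, hPR, by rw [cx, ← hx], by rw [cy, ← hy], ?_, ?_⟩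
    · rw [hx, card_cInt _ (by have := (hk i).2; omega)]
    · rw [hy, card_cInt _ (by have := (hl i).2; omega)]
  by_cases hx : ∀ P ∈ Finset.univ.biUnion R, ∀ Q ∈ Finset.univ.biUnion R, (P.1 ∩ Q.1).Nonempty
  · -- all x-projections pairwise meet: Helly, star bound in x
    set S : Finset (ZMod n₁ × ℕ) :=
      (Finset.univ.biUnion R).image (fun P => (corner P.1, P.1.card)) with hS
    obtain ⟨z, hz⟩ := helly hn1b hb S (hTe.image _) (by
      intro p hp
      obtain ⟨P, hPT, rfl⟩ := Finset.mem_image.mp hp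
      obtain ⟨i, _, _, _, hkc, _⟩ := hdata P hPT
      simp only [hkc]
      exact ⟨(hk i).1, (hk i).2⟩) (by
      intro p hp r hr
      obtain ⟨P, hPT, rfl⟩ := Finset.mem_image.mp hp
      obtain ⟨Q, hQT, rfl⟩ := Finset.mem_image.mp hr
      obtain ⟨i, _, hx1, _, hkc, _⟩ := hdata P hPT
      obtain ⟨j, _, hx2, _, hkc2, _⟩ := hdata Q hQT
      have e1 : cInt (corner P.1) P.1.card = P.1 := by rw [hkc, ← hx1]
      have e2 : cInt (corner Q.1) Q.1.card = Q.1 := by rw [hkc2, ← hx2]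
      rw [e1, e2]
      exact hx P hPT Q hQT)
    have hzT : ∀ P ∈ Finset.univ.biUnion R, z ∈ P.1 := by
      intro P hPT
      obtain ⟨i, _, hx1, _, hkc, _⟩ := hdata P hPT
      have := hz (corner P.1, P.1.card) (Finset.mem_image_of_mem _ hPT)
      simp only at this
      rwa [hkc, ← hx1] at this
    refine le_trans ?_ (le_max_right _ _)
    exact aux_star m b n₁ n₂ k ℓ lam hk hl hlam hb h1 h2 R hrect hproj z 0 1 one_pos (by omega)
      (fun P hP => Or.inl (hzT P hP)) (fun P hP => Or.inl (hzT P hP))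
  · -- there is an x-disjoint pair
    push_neg at hx
    obtain ⟨P₁, hP₁T, P₂, hP₂T, hxd⟩ := hx
    have hxde : P₁.1 ∩ P₂.1 = ∅ := hxd
    have hymeet : (P₁.2 ∩ P₂.2).Nonempty := by
      rcases hproj P₁ hP₁T P₂ hP₂T with hc | hc
      · rw [hxde] at hc; exact absurd hc (by simp)
      · exact hc
    obtain ⟨i1, hP1R, hx1, hy1, _, _⟩ := hdata P₁ hP₁T
    obtain ⟨i2, hP2R, hx2, hy2, _, _⟩ := hdata P₂ hP₂T
    obtain ⟨qs, hq⟩ := gap_point (hk i1).1 (hk i2).1 (hk i1).2 (hk i2).2 hn1b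
      (by rw [← hx1, ← hx2]; exact hxde)
    obtain ⟨ys, Ly, hLy0, hLyle, hys1, hys2⟩ := union_cover (n := n₂) (bb := b)
      (y₁ := corner P₁.2) (y₂ := corner P₂.2) (hl i1).1 (hl i2).1
      (hl i1).2 (hl i2).2 (by omega) (by rw [← hy1, ← hy2]; exact hymeet)
    have hLyb : Ly ≤ 2*b := by have := (hl i1).2; have := (hl i2).2; omega
    have hD : ∀ P ∈ Finset.univ.biUnion R, qs ∈ P.1 ∨ (P.2 ∩ cInt ys Ly).Nonempty := by
      intro P hPT
      obtain ⟨i, _, hxP, hyP, _, _⟩ := hdata P hPT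
      rcases hproj P hPT P₁ hP₁T with hc1 | hc1
      · rcases hproj P hPT P₂ hP₂T with hc2 | hc2
        · left
          rw [hxP]
          apply hq (corner P.1) (k i) (hk i).1 (hk i).2
          · rw [← hx1, ← hxP]; exact hc1
          · rw [← hx2, ← hxP]; exact hc2
        · right
          apply Finset.Nonempty.mono _ hc2
          apply Finset.inter_subset_inter (le_refl _)
          rw [hy2]; exact hys2
      · right
        apply Finset.Nonempty.mono _ hc1
        apply Finset.inter_subset_inter (le_refl _)
        rw [hy1]; exact hys1
    by_cases hy : ∀ P ∈ Finset.univ.biUnion R, ∀ Q ∈ Finset.univ.biUnion R, (P.2 ∩ Q.2).Nonempty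
    · -- all y-projections pairwise meet: Helly in y, star bound in y (swapped)
      set S : Finset (ZMod n₂ × ℕ) :=
        (Finset.univ.biUnion R).image (fun P => (corner P.2, P.2.card)) with hS
      obtain ⟨z, hz⟩ := helly hn2b hb S (hTe.image _) (by
        intro p hp
        obtain ⟨P, hPT, rfl⟩ := Finset.mem_image.mp hp
        obtain ⟨i, _, _, _, _, hlc⟩ := hdata P hPT
        simp only [hlc]
        exact ⟨(hl i).1, (hl i).2⟩) (by
        intro p hp r hr
        obtain ⟨P, hPT, rfl⟩ := Finset.mem_image.mp hp
        obtain ⟨Q, hQT, rfl⟩ := Finset.mem_image.mp hr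
        obtain ⟨i, _, _, hy1', _, hlc⟩ := hdata P hPT
        obtain ⟨j, _, _, hy2', _, hlc2⟩ := hdata Q hQT
        have e1 : cInt (corner P.2) P.2.card = P.2 := by rw [hlc, ← hy1']
        have e2 : cInt (corner Q.2) Q.2.card = Q.2 := by rw [hlc2, ← hy2']
        rw [e1, e2]
        exact hy P hPT Q hQT)
      have hzT : ∀ P ∈ Finset.univ.biUnion R, z ∈ P.2 := by
        intro P hPT
        obtain ⟨i, _, _, hy1', _, hlc⟩ := hdata P hPT
        have := hz (corner P.2, P.2.card) (Finset.mem_image_of_mem _ hPT)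
        simp only at this
        rwa [hlc, ← hy1'] at this
      refine le_trans ?_ (le_max_left _ _)
      exact aux_star_swapped m b n₁ n₂ k ℓ lam hk hl hlam hb h1 h2 R hrect hproj z 0 1 one_pos
        (by omega) (fun P hP => Or.inl (hzT P hP)) (fun P hP => Or.inl (hzT P hP))
    · -- there is a y-disjoint pair as well
      push_neg at hy
      obtain ⟨Q₁, hQ₁T, Q₂, hQ₂T, hyd⟩ := hy
      have hyde : Q₁.2 ∩ Q₂.2 = ∅ := hyd
      have hxmeet : (Q₁.1 ∩ Q₂.1).Nonempty := by
        rcases hproj Q₁ hQ₁T Q₂ hQ₂T with hc | hc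
        · exact hc
        · rw [hyde] at hc; exact absurd hc (by simp)
      obtain ⟨j1, hQ1R, hxq1, hyq1, _, _⟩ := hdata Q₁ hQ₁T
      obtain ⟨j2, hQ2R, hxq2, hyq2, _, _⟩ := hdata Q₂ hQ₂T
      obtain ⟨ps, hp⟩ := gap_point (hl j1).1 (hl j2).1 (hl j1).2 (hl j2).2 hn2b
        (by rw [← hyq1, ← hyq2]; exact hyde)
      obtain ⟨xs, Lx, hLx0, hLxle, hxs1, hxs2⟩ := union_cover (n := n₁) (bb := b)
        (y₁ := corner Q₁.1) (y₂ := corner Q₂.1) (hk j1).1 (hk j2).1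
        (hk j1).2 (hk j2).2 (by omega) (by rw [← hxq1, ← hxq2]; exact hxmeet)
      have hLxb : Lx ≤ 2*b := by have := (hk j1).2; have := (hk j2).2; omega
      have hD2 : ∀ P ∈ Finset.univ.biUnion R, ps ∈ P.2 ∨ (P.1 ∩ cInt xs Lx).Nonempty := by
        intro P hPT
        obtain ⟨i, _, hxP, hyP, _, _⟩ := hdata P hPT
        rcases hproj P hPT Q₁ hQ₁T with hc1 | hc1
        · right
          apply Finset.Nonempty.mono _ hc1
          apply Finset.inter_subset_inter (le_refl _)
          rw [hxq1]; exact hxs1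
        · rcases hproj P hPT Q₂ hQ₂T with hc2 | hc2
          · right
            apply Finset.Nonempty.mono _ hc2
            apply Finset.inter_subset_inter (le_refl _)
            rw [hxq2]; exact hxs2
          · left
            rw [hyP]
            apply hp (corner P.2) (ℓ i) (hl i).1 (hl i).2
            · rw [← hyq1, ← hyP]; exact hc1
            · rw [← hyq2, ← hyP]; exact hc2
      by_cases hnear1 : ∀ P ∈ Finset.univ.biUnion R, qs ∈ P.1 ∨
          (P.1 ∩ cInt (qs - ((b-1:ℕ) : ZMod n₁)) (2*b-1)).Nonempty
      · refine le_trans ?_ (le_max_right _ _)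
        exact aux_star m b n₁ n₂ k ℓ lam hk hl hlam hb h1 h2 R hrect hproj qs ys Ly hLy0 hLyb
          hD hnear1
      · push_neg at hnear1
        obtain ⟨h0, hh0T, _, hh0far'⟩ := hnear1
        have hh0far : h0.1 ∩ cInt (qs - ((b-1:ℕ) : ZMod n₁)) (2*b-1) = ∅ :=
          hh0far'
        by_cases hnear2 : ∀ P ∈ Finset.univ.biUnion R, ps ∈ P.2 ∨
            (P.2 ∩ cInt (ps - ((b-1:ℕ) : ZMod n₂)) (2*b-1)).Nonempty
        · refine le_trans ?_ (le_max_left _ _)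
          exact aux_star_swapped m b n₁ n₂ k ℓ lam hk hl hlam hb h1 h2 R hrect hproj ps xs Lx
            hLx0 hLxb hD2 hnear2
        · push_neg at hnear2
          obtain ⟨h1r, hh1T, _, hh1far'⟩ := hnear2
          have hh1far : h1r.2 ∩ cInt (ps - ((b-1:ℕ) : ZMod n₂)) (2*b-1) = ∅ :=
            hh1far'
          refine le_trans ?_ (le_max_right _ _)
          exact aux_mixed m b n₁ n₂ k ℓ lam hk hl hlam hb h1 h2 R hrect hproj qs ys Ly hLy0 hLyb
            hD ps xs Lx hLx0 hLxb hD2 h0 hh0T hh0far h1r hh1T hh1far
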